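/- arXiv:2208.01125 — 5 statements merged into one kernel-verified Lean document; each statement's English description precedes it below -/
import Mathlib

section
/- For every polynomial p with real coefficients and every z > 0, the linear functional L[p] = ∫_{-z}^{z} p(x) e^{-x²} dx satisfies the Pearson-type equation L[∂_x((x²−z²)p(x))] = L[2x(x²−z²)p(x)]. -/
open Polynomial

/-- The truncated Hermite linear functional `L[p] = ∫_{-z}^{z} p(x) e^{-x²} dx`. -/
noncomputable def truncL (z : ℝ) (p : Polynomial ℝ) : ℝ :=
  ∫ x in (-z)..z, p.eval x * Real.exp (-x ^ 2)

theorem truncated_hermite_pearson (z : ℝ) (hz : 0 < z) (p : Polynomial ℝ) :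
    truncL z (derivative ((X ^ 2 - C (z ^ 2)) * p)) =
      truncL z (2 * X * (X ^ 2 - C (z ^ 2)) * p) := by
  set q : Polynomial ℝ := (X ^ 2 - C (z ^ 2)) * p with hq
  have key : ∀ x : ℝ, HasDerivAt (fun x : ℝ => q.eval x * Real.exp (-x ^ 2))
      ((derivative q).eval x * Real.exp (-x ^ 2)
        - (2 * X * q : Polynomial ℝ).eval x * Real.exp (-x ^ 2)) x := by
    intro x
    have h1 : HasDerivAt (fun x : ℝ => q.eval x) ((derivative q).eval x) x :=
      q.hasDerivAt x
    have h2 : HasDerivAt (fun x : ℝ => Real.exp (-x ^ 2))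
        (Real.exp (-x ^ 2) * (-(2 * x))) x := by
      have : HasDerivAt (fun x : ℝ => -x ^ 2) (-(2 * x)) x := by
        simpa using ((hasDerivAt_pow 2 x).fun_neg)
      exact (Real.hasDerivAt_exp _).comp x this
    have := h1.fun_mul h2
    refine this.congr_deriv ?_
    simp only [eval_mul, eval_ofNat, eval_X]
    ring
  have hint : (∫ x in (-z)..z, ((derivative q).eval x * Real.exp (-x ^ 2)
        - (2 * X * q : Polynomial ℝ).eval x * Real.exp (-x ^ 2)))
      = q.eval z * Real.exp (-z ^ 2) - q.eval (-z) * Real.exp (-(-z) ^ 2) := by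
    apply intervalIntegral.integral_eq_sub_of_hasDerivAt (fun x _ => key x)
    apply Continuous.intervalIntegrable
    exact ((q.derivative.continuous).mul (Real.continuous_exp.comp (continuous_pow 2).neg)).sub
      (((2 * X * q : Polynomial ℝ).continuous).mul (Real.continuous_exp.comp (continuous_pow 2).neg))
  have hqz : q.eval z = 0 := by simp [hq]
  have hqz' : q.eval (-z) = 0 := by simp [hq]
  rw [hqz, hqz'] at hint
  simp only [zero_mul, sub_zero] at hint
  have hsub : (∫ x in (-z)..z, ((derivative q).eval x * Real.exp (-x ^ 2)
        - (2 * X * q : Polynomial ℝ).eval x * Real.exp (-x ^ 2)))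
      = (∫ x in (-z)..z, (derivative q).eval x * Real.exp (-x ^ 2))
        - ∫ x in (-z)..z, (2 * X * q : Polynomial ℝ).eval x * Real.exp (-x ^ 2) := by
    exact intervalIntegral.integral_sub
      (((q.derivative.continuous).mul (Real.continuous_exp.comp (continuous_pow 2).neg)).intervalIntegrable _ _)
      ((((2 * X * q : Polynomial ℝ).continuous).mul (Real.continuous_exp.comp (continuous_pow 2).neg)).intervalIntegrable _ _)
  rw [hsub] at hint
  have : truncL z (derivative q) = truncL z (2 * X * q) := by
    unfold truncL; linarith
  simpa [hq, mul_assoc] using this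
end

section
/- For every polynomial p with real coefficients and every z > 0, L[(x²−z²)·p'(x)] = L[2x(x²−z²−1)·p(x)], where L[p] = ∫_{-z}^{z} p(x) e^{-x²} dx. -/
open Polynomial

lemma key_deriv (z : ℝ) (p : Polynomial ℝ) (x : ℝ) :
    HasDerivAt (fun x : ℝ => (x ^ 2 - z ^ 2) * Real.exp (-x ^ 2) * p.eval x)
      (((x ^ 2 - z ^ 2) * (derivative p).eval x
        + 2 * x * (x ^ 2 - z ^ 2 - 1) * (-1) * p.eval x) * Real.exp (-x ^ 2)) x := by
  have h1 : HasDerivAt (fun x : ℝ => x ^ 2 - z ^ 2) (2 * x) x := by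
    simpa using ((hasDerivAt_pow 2 x).sub_const (z ^ 2))
  have h2 : HasDerivAt (fun x : ℝ => Real.exp (-x ^ 2)) (-(2 * x) * Real.exp (-x ^ 2)) x := by
    have : HasDerivAt (fun x : ℝ => -x ^ 2) (-(2 * x)) x := by
      simpa using (hasDerivAt_pow 2 x).fun_neg
    simpa [mul_comm] using this.exp
  have h3 : HasDerivAt (fun x : ℝ => p.eval x) ((derivative p).eval x) x := p.hasDerivAt x
  have := ((h1.fun_mul h2).fun_mul h3)
  refine this.congr_deriv ?_
  ring

theorem truncated_hermite_pearson2 (z : ℝ) (hz : 0 < z) (p : Polynomial ℝ) :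
    truncL z ((X ^ 2 - C (z ^ 2)) * derivative p) =
      truncL z (2 * X * (X ^ 2 - C (z ^ 2) - 1) * p) := by
  have hcont : Continuous fun x : ℝ =>
      ((x ^ 2 - z ^ 2) * (derivative p).eval x
        + 2 * x * (x ^ 2 - z ^ 2 - 1) * (-1) * p.eval x) * Real.exp (-x ^ 2) := by
    fun_prop
  have hint := intervalIntegral.integral_eq_sub_of_hasDerivAt
    (f := fun x : ℝ => (x ^ 2 - z ^ 2) * Real.exp (-x ^ 2) * p.eval x)
    (fun x _ => key_deriv z p x) (hcont.intervalIntegrable (-z) z)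
  have hzero : (∫ x in (-z)..z,
      ((x ^ 2 - z ^ 2) * (derivative p).eval x
        + 2 * x * (x ^ 2 - z ^ 2 - 1) * (-1) * p.eval x) * Real.exp (-x ^ 2)) = 0 := by
    rw [hint]
    simp [neg_pow]
  have hsplit : (∫ x in (-z)..z,
      ((x ^ 2 - z ^ 2) * (derivative p).eval x
        + 2 * x * (x ^ 2 - z ^ 2 - 1) * (-1) * p.eval x) * Real.exp (-x ^ 2))
    = (∫ x in (-z)..z, ((x ^ 2 - z ^ 2) * (derivative p).eval x) * Real.exp (-x ^ 2))
      - (∫ x in (-z)..z, (2 * x * (x ^ 2 - z ^ 2 - 1) * p.eval x) * Real.exp (-x ^ 2)) := by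
    rw [← intervalIntegral.integral_sub]
    · congr 1; ext x; ring
    · exact (by fun_prop : Continuous fun x : ℝ =>
        ((x ^ 2 - z ^ 2) * (derivative p).eval x) * Real.exp (-x ^ 2)).intervalIntegrable _ _
    · exact (by fun_prop : Continuous fun x : ℝ =>
        (2 * x * (x ^ 2 - z ^ 2 - 1) * p.eval x) * Real.exp (-x ^ 2)).intervalIntegrable _ _
  have h := hsplit.symm.trans hzero
  have := sub_eq_zero.mp h
  unfold truncL
  simpa [mul_comm, mul_assoc, mul_left_comm] using this
end

section
/- Let u_n(z) = ∫_{-z}^{z} x^{2n} e^{-x²} dx. Then for every n ∈ ℕ and z > 0, the second-order homogeneous recurrence 2·u_{n+2}(z) − (2n + 3 + 2z²)·u_{n+1}(z) + (2n+1)·z²·u_n(z) = 0 holds. -/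
/-- The even moments `u_n(z) = ∫_{-z}^{z} x^{2n} e^{-x²} dx`. -/
noncomputable def truncMoment (n : ℕ) (z : ℝ) : ℝ :=
  ∫ x in (-z)..z, x ^ (2 * n) * Real.exp (-x ^ 2)

lemma truncMoment_step (n : ℕ) (z : ℝ) :
    (2 * (n : ℝ) + 1) * truncMoment n z - 2 * truncMoment (n + 1) z
      = 2 * z ^ (2 * n + 1) * Real.exp (-z ^ 2) := by
  have hderiv : ∀ x : ℝ, HasDerivAt (fun x : ℝ => x ^ (2 * n + 1) * Real.exp (-x ^ 2))
      ((2 * (n : ℝ) + 1) * (x ^ (2 * n) * Real.exp (-x ^ 2))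
        - 2 * (x ^ (2 * (n + 1)) * Real.exp (-x ^ 2))) x := by
    intro x
    have h1 : HasDerivAt (fun x : ℝ => x ^ (2 * n + 1))
        ((2 * (n : ℝ) + 1) * x ^ (2 * n)) x := by
      have := hasDerivAt_pow (2 * n + 1) x
      simpa [Nat.add_sub_cancel] using this
    have h2 : HasDerivAt (fun x : ℝ => Real.exp (-x ^ 2))
        (Real.exp (-x ^ 2) * (-(2 * x))) x := by
      have h3 : HasDerivAt (fun x : ℝ => -x ^ 2) (-(2 * x)) x := by
        simpa using (hasDerivAt_pow 2 x).fun_neg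
      exact h3.exp
    have : HasDerivAt (fun x : ℝ => x ^ (2 * n + 1) * Real.exp (-x ^ 2)) _ x := h1.fun_mul h2
    convert this using 1
    ring
  have hcont : ∀ m : ℕ, Continuous (fun x : ℝ => x ^ m * Real.exp (-x ^ 2)) := by
    intro m; fun_prop
  have hint : ∀ m : ℕ,
      IntervalIntegrable (fun x : ℝ => x ^ m * Real.exp (-x ^ 2)) MeasureTheory.volume (-z) z :=
    fun m => (hcont m).intervalIntegrable _ _
  have hftc := intervalIntegral.integral_eq_sub_of_hasDerivAt
    (f := fun x : ℝ => x ^ (2 * n + 1) * Real.exp (-x ^ 2)) (a := -z) (b := z)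
    (fun x _ => hderiv x)
    ((((continuous_const.mul (hcont (2 * n))).sub (continuous_const.mul (hcont (2 * (n + 1))))).intervalIntegrable _ _))
  rw [intervalIntegral.integral_sub (((hint (2 * n)).const_mul _))
      (((hint (2 * (n + 1))).const_mul 2)),
    intervalIntegral.integral_const_mul, intervalIntegral.integral_const_mul] at hftc
  have hodd : (-z) ^ (2 * n + 1) = -z ^ (2 * n + 1) := by
    rw [Odd.neg_pow ⟨n, by ring⟩]
  rw [truncMoment, truncMoment]
  rw [hftc]
  simp only [hodd, neg_sq]
  ring

theorem truncated_hermite_moment_second_order_recurrence (n : ℕ) (z : ℝ) (hz : 0 < z) :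
    2 * truncMoment (n + 2) z - (2 * (n : ℝ) + 3 + 2 * z ^ 2) * truncMoment (n + 1) z +
      (2 * (n : ℝ) + 1) * z ^ 2 * truncMoment n z = 0 := by
  have h1 := truncMoment_step n z
  have h2 := truncMoment_step (n + 1) z
  have hpow : z ^ (2 * (n + 1) + 1) = z ^ 2 * z ^ (2 * n + 1) := by ring
  push_cast at h2
  rw [hpow] at h2
  nlinarith [h1, h2]
end

section
/- Let (P_n)_{n≥0} be the monic orthogonal polynomials for the truncated Hermite functional L[p] = ∫_{-z}^{z} p(x) e^{-x²} dx (z > 0 fixed), with three-term recurrence x P_n = P_{n+1} + γ_n P_{n-1} (P_{-1}=0, P_0=1) and norms h_n = L[P_n²]. Then for every n ≥ 1, P_n(z)·P_{n−1}(z)·e^{-z²} = (n/2 − γ_n)·h_{n−1}. -/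
open Polynomial

private lemma truncL_intble (a b : ℝ) (p : Polynomial ℝ) :
    IntervalIntegrable (fun x => p.eval x * Real.exp (-x ^ 2)) MeasureTheory.volume a b := by
  apply Continuous.intervalIntegrable
  exact (p.continuous).mul (Real.continuous_exp.comp (continuous_pow 2).neg)

private lemma truncL_add (z : ℝ) (p q : Polynomial ℝ) :
    truncL z (p + q) = truncL z p + truncL z q := by
  unfold truncL
  rw [← intervalIntegral.integral_add (truncL_intble _ _ p) (truncL_intble _ _ q)]
  simp [add_mul]

private lemma truncL_Cmul (z a : ℝ) (p : Polynomial ℝ) :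
    truncL z (C a * p) = a * truncL z p := by
  unfold truncL
  rw [← intervalIntegral.integral_const_mul]
  simp [mul_assoc]

private lemma truncL_zero (z : ℝ) : truncL z 0 = 0 := by simp [truncL]

private lemma truncL_sub (z : ℝ) (p q : Polynomial ℝ) :
    truncL z (p - q) = truncL z p - truncL z q := by
  have h := truncL_add z (p - q) q
  simp only [sub_add_cancel] at h
  linarith

private lemma truncL_ftc (z : ℝ) (p : Polynomial ℝ) :
    truncL z (derivative p) - 2 * truncL z (X * p)
      = p.eval z * Real.exp (-z ^ 2) - p.eval (-z) * Real.exp (-z ^ 2) := by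
  have key : (∫ x in (-z)..z,
        ((derivative p).eval x - 2 * (x * p.eval x)) * Real.exp (-x ^ 2))
      = p.eval z * Real.exp (-z ^ 2) - p.eval (-z) * Real.exp (-(-z) ^ 2) := by
    apply intervalIntegral.integral_eq_sub_of_hasDerivAt
    · intro x _
      have h1 : HasDerivAt (fun y : ℝ => p.eval y) (p.derivative.eval x) x := p.hasDerivAt x
      have hx2 : HasDerivAt (fun y : ℝ => -y ^ 2) (-(2 * x)) x := by
        simpa using (hasDerivAt_pow 2 x).fun_neg
      have h2 : HasDerivAt (fun y : ℝ => Real.exp (-y ^ 2))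
          (Real.exp (-x ^ 2) * (-(2 * x))) x := hx2.exp
      have := h1.fun_mul h2
      exact this.congr_deriv (by ring)
    · apply Continuous.intervalIntegrable
      exact (((derivative p).continuous).sub (continuous_const.mul
        (continuous_id.mul p.continuous))).mul
        (Real.continuous_exp.comp (continuous_pow 2).neg)
  have e1 : truncL z (derivative p - C 2 * (X * p))
      = truncL z (derivative p) - 2 * truncL z (X * p) := by
    rw [truncL_sub, truncL_Cmul]
  have e2 : truncL z (derivative p - C 2 * (X * p))
      = ∫ x in (-z)..z, ((derivative p).eval x - 2 * (x * p.eval x)) * Real.exp (-x ^ 2) := by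
    unfold truncL
    simp [eval_sub, eval_mul, eval_X, eval_C]
  rw [← e1, e2, key, neg_sq]

theorem truncated_hermite_boundary_identity (z : ℝ) (hz : 0 < z)
    (P : ℕ → Polynomial ℝ) (γ h : ℕ → ℝ)
    (hmonic : ∀ n, (P n).Monic) (hdeg : ∀ n, (P n).natDegree = n)
    (horth : ∀ m n, m ≠ n → truncL z (P m * P n) = 0)
    (hP0 : P 0 = 1) (hP1 : P 1 = X)
    (hrec : ∀ n, X * P (n + 1) = P (n + 2) + C (γ (n + 1)) * P n)
    (hh : ∀ n, h n = truncL z (P n * P n)) :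
    ∀ n : ℕ, 1 ≤ n →
      (P n).eval z * (P (n - 1)).eval z * Real.exp (-z ^ 2) =
        ((n : ℝ) / 2 - γ n) * h (n - 1) := by
  -- orthogonality to all lower-degree polynomials
  have key : ∀ (d : ℕ) (q : Polynomial ℝ), q.natDegree = d → ∀ n, d < n →
      truncL z (P n * q) = 0 := by
    intro d
    induction d using Nat.strong_induction_on with
    | _ d ih =>
      intro q hqd n hn
      rcases eq_or_ne q 0 with rfl | h0
      · simpa using truncL_zero z
      · set c := q.coeff d with hc
        set r := q - C c * P d with hr
        have hq' : q = C c * P d + r := by rw [hr]; ring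
        have hsplit : truncL z (P n * q) = c * truncL z (P n * P d) + truncL z (P n * r) := by
          rw [hq']
          have : P n * (C c * P d + r) = C c * (P n * P d) + P n * r := by ring
          rw [this, truncL_add, truncL_Cmul]
        have horth' : truncL z (P n * P d) = 0 := horth n d (by omega)
        rcases eq_or_ne r 0 with hr0 | hr0
        · simp [hsplit, horth', hr0, truncL_zero]
        · -- r ≠ 0, show natDegree r < d
          have hcne : c ≠ 0 := by
            rw [hc, ← hqd]
            exact Polynomial.leadingCoeff_ne_zero.mpr h0
          have hdpos : d ≠ 0 := by
            intro hd0
            apply hr0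
            have hqC : q = C (q.coeff 0) :=
              Polynomial.eq_C_of_natDegree_eq_zero (by rw [hqd, hd0])
            rw [hr, hd0, hP0, mul_one, sub_eq_zero, hc, hd0]
            exact hqC
          have hdegq : q.degree = (d : ℕ) := by
            rw [← hqd]; exact Polynomial.degree_eq_natDegree h0
          have hdegCP : (C c * P d).degree = (d : ℕ) := by
            rw [Polynomial.degree_C_mul hcne, Polynomial.degree_eq_natDegree
              (hmonic d).ne_zero, hdeg d]
          have hdr : r.degree < (d : ℕ) := by
            rw [hr]
            have := Polynomial.degree_sub_lt (hdegq.trans hdegCP.symm) h0 ?_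
            · rwa [hdegq] at this
            · rw [Polynomial.leadingCoeff, hqd, ← hc]
              rw [Polynomial.leadingCoeff_mul, Polynomial.leadingCoeff_C, (hmonic d).leadingCoeff,
                mul_one]
          have hndr : r.natDegree < d := by
            rwa [← Polynomial.natDegree_lt_iff_degree_lt hr0] at hdr
          have hrzero : truncL z (P n * r) = 0 :=
            ih r.natDegree hndr r rfl n (by omega)
          rw [hsplit, horth', mul_zero, zero_add, hrzero]
  -- parity
  have hpar : ∀ n, (P n).eval (-z) = (-1 : ℝ) ^ n * (P n).eval z := by
    have main : ∀ n, (P n).eval (-z) = (-1 : ℝ) ^ n * (P n).eval z ∧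
        (P (n + 1)).eval (-z) = (-1 : ℝ) ^ (n + 1) * (P (n + 1)).eval z := by
      intro n
      induction n with
      | zero => simp [hP0, hP1]
      | succ k ih =>
        refine ⟨ih.2, ?_⟩
        have e1 : (P (k + 2)).eval (-z) = -z * (P (k + 1)).eval (-z)
            - γ (k + 1) * (P k).eval (-z) := by
          have := congrArg (eval (-z)) (hrec k)
          simp only [eval_mul, eval_add, eval_X, eval_C] at this
          linarith
        have e2 : (P (k + 2)).eval z = z * (P (k + 1)).eval z
            - γ (k + 1) * (P k).eval z := by
          have := congrArg (eval z) (hrec k)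
          simp only [eval_mul, eval_add, eval_X, eval_C] at this
          linarith
        rw [e1, e2, ih.1, ih.2]
        ring
    exact fun n => (main n).1
  -- main computation
  intro n hn
  obtain ⟨m, rfl⟩ : ∃ m, n = m + 1 := ⟨n - 1, by omega⟩
  simp only [Nat.add_sub_cancel]
  -- orth1 : L[P_{m+1} * (P_m)'] = 0
  have orth1 : truncL z (P (m + 1) * derivative (P m)) = 0 := by
    apply key (derivative (P m)).natDegree _ rfl
    have := Polynomial.natDegree_derivative_le (P m)
    rw [hdeg m] at this
    omega
  -- orth2 : L[P_m * (P_{m+1})'] = (m+1) * h m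
  have orth2 : truncL z (P m * derivative (P (m + 1))) = (m + 1 : ℝ) * h m := by
    set D := derivative (P (m + 1)) - C ((m + 1 : ℕ) : ℝ) * P m with hD
    have hDsplit : P m * derivative (P (m + 1))
        = C ((m + 1 : ℕ) : ℝ) * (P m * P m) + P m * D := by
      rw [hD]; ring
    have hDzero : truncL z (P m * D) = 0 := by
      rcases eq_or_ne D 0 with hD0 | hD0
      · simp [hD0, truncL_zero]
      · apply key D.natDegree _ rfl
        -- D has natDegree < m
        have hle1 : (derivative (P (m + 1))).natDegree ≤ m := by
          have := Polynomial.natDegree_derivative_le (P (m + 1))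
          rw [hdeg (m + 1)] at this
          omega
        have hle2 : (C ((m + 1 : ℕ) : ℝ) * P m).natDegree ≤ m := by
          refine le_trans (Polynomial.natDegree_C_mul_le _ _) ?_
          rw [hdeg m]
        have hDle : D.natDegree ≤ m := le_trans (Polynomial.natDegree_sub_le _ _) (by omega)
        have hcoeff : D.coeff m = 0 := by
          rw [hD, Polynomial.coeff_sub, Polynomial.coeff_derivative,
            Polynomial.coeff_C_mul]
          have c1 : (P (m + 1)).coeff (m + 1) = 1 := by
            have := (hmonic (m + 1)).leadingCoeff
            rwa [Polynomial.leadingCoeff, hdeg (m + 1)] at this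
          have c2 : (P m).coeff m = 1 := by
            have := (hmonic m).leadingCoeff
            rwa [Polynomial.leadingCoeff, hdeg m] at this
          rw [c1, c2]
          push_cast
          ring
        rcases lt_or_eq_of_le hDle with hlt | heq
        · exact hlt
        · exfalso
          apply hD0
          have : D.leadingCoeff = 0 := by rw [Polynomial.leadingCoeff, heq, hcoeff]
          exact Polynomial.leadingCoeff_eq_zero.mp this
    rw [hDsplit, truncL_add, truncL_Cmul, hDzero, add_zero, ← hh m]
    push_cast
    ring
  -- orth3 : L[X * (P_{m+1} * P_m)] = γ_{m+1} * h m
  have orth3 : truncL z (X * (P (m + 1) * P m)) = γ (m + 1) * h m := by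
    have hr := hrec m
    have : X * (P (m + 1) * P m) = P (m + 2) * P m + C (γ (m + 1)) * (P m * P m) := by
      rw [← mul_assoc, hr]; ring
    rw [this, truncL_add, truncL_Cmul, horth (m + 2) m (by omega), ← hh m, zero_add]
  -- FTC applied to p = P_{m+1} * P_m
  have ftc := truncL_ftc z (P (m + 1) * P m)
  rw [Polynomial.derivative_mul] at ftc
  have hdsplit : truncL z (derivative (P (m + 1)) * P m + P (m + 1) * derivative (P m))
      = (m + 1 : ℝ) * h m := by
    rw [truncL_add, mul_comm (derivative (P (m + 1))) (P m), orth2, orth1, add_zero]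
  rw [hdsplit, orth3] at ftc
  have heval : (P (m + 1) * P m).eval z = (P (m + 1)).eval z * (P m).eval z := by
    simp [eval_mul]
  have hsign : ((-1 : ℝ)) ^ (m + 1) * (-1) ^ m = -1 := by
    rw [← pow_add]
    exact Odd.neg_one_pow ⟨m, by omega⟩
  have hevalneg : (P (m + 1) * P m).eval (-z)
      = -((P (m + 1)).eval z * (P m).eval z) := by
    rw [eval_mul, hpar (m + 1), hpar m]
    linear_combination ((P (m + 1)).eval z * (P m).eval z) * hsign
  rw [heval, hevalneg] at ftc
  have hcast : ((m + 1 : ℕ) : ℝ) = (m : ℝ) + 1 := by push_cast; ring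
  rw [hcast]
  linear_combination (-1/2 : ℝ) * ftc
end

section
/- For the monic truncated Hermite polynomials, if γ_n(z) admits a power series expansion γ_n(z) = Σ_{k≥1} η_{n,k} z^{2k} near z = 0, then the leading coefficient is η_{n,1} = n²/(4n² − 1). -/
open Polynomial Finset Filter

set_option linter.unusedSectionVars false
set_option maxHeartbeats 1000000

namespace THG

/-! ### Generic facts about linear functionals on polynomials -/

section Gram
variable (L : Polynomial ℝ → ℝ)
  (hadd : ∀ p q, L (p + q) = L p + L q)
  (hsmul : ∀ (c : ℝ) p, L (C c * p) = c * L p)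

include hadd hsmul

lemma L_zero : L 0 = 0 := by
  have := hadd 0 0; simpa using this

lemma L_sum {ι : Type*} (s : Finset ι) (f : ι → Polynomial ℝ) :
    L (∑ i ∈ s, f i) = ∑ i ∈ s, L (f i) := by
  classical
  induction s using Finset.induction with
  | empty => simpa using L_zero L hadd hsmul
  | insert _ _ h ih => rw [Finset.sum_insert h, hadd, ih, Finset.sum_insert h]

lemma L_mul_expand (p q : Polynomial ℝ) {n : ℕ} (hp : p.natDegree < n) :
    L (p * q) = ∑ i ∈ range n, p.coeff i * L (X ^ i * q) := by
  conv_lhs => rw [p.as_sum_range' n hp]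
  rw [Finset.sum_mul, L_sum L hadd hsmul]
  refine Finset.sum_congr rfl fun i _ => ?_
  rw [← C_mul_X_pow_eq_monomial, mul_assoc, hsmul]

lemma gram_det (p : ℕ → Polynomial ℝ) (hmon : ∀ i, (p i).Monic)
    (hdeg : ∀ i, (p i).natDegree = i) (horth : ∀ i j, i ≠ j → L (p i * p j) = 0) (n : ℕ) :
    (Matrix.of fun i j : Fin n => L (X ^ ((i : ℕ) + (j : ℕ)))).det
      = ∏ i : Fin n, L (p i * p i) := by
  classical
  set M : Matrix (Fin n) (Fin n) ℝ := Matrix.of fun i j : Fin n => L (X ^ ((i : ℕ) + (j : ℕ)))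
  set A : Matrix (Fin n) (Fin n) ℝ := Matrix.of fun i j : Fin n => (p j).coeff i with hA
  have hAtri : A.BlockTriangular id := by
    intro i j hij
    simp only [hA, Matrix.of_apply, A]
    exact coeff_eq_zero_of_natDegree_lt (by rw [hdeg]; exact hij)
  have hdetA : A.det = 1 := by
    rw [Matrix.det_of_upperTriangular hAtri]
    refine Finset.prod_eq_one fun i _ => ?_
    have := (hmon i).leadingCoeff
    simpa [hA, Polynomial.leadingCoeff, hdeg] using this
  have key : A.transpose * M * A = Matrix.diagonal (fun i : Fin n => L (p i * p i)) := by
    ext j k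
    rw [Matrix.mul_apply]
    simp only [Matrix.mul_apply, Matrix.transpose_apply, hA, Matrix.of_apply, A, M]
    have expand : L (p j * p k)
        = ∑ l ∈ range n, ∑ i ∈ range n,
            (p j).coeff i * L (X ^ (i + (l:ℕ))) * (p k).coeff l := by
      rw [L_mul_expand L hadd hsmul _ _ (by rw [hdeg]; exact j.2)]
      rw [Finset.sum_comm]
      refine Finset.sum_congr rfl fun i _ => ?_
      rw [mul_comm (X ^ i) (p k),
        L_mul_expand L hadd hsmul _ _ (by rw [hdeg]; exact k.2), Finset.mul_sum]
      refine Finset.sum_congr rfl fun l _ => ?_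
      rw [mul_comm (X ^ l) (X ^ i), ← pow_add]
      ring
    have e1 : (∑ l : Fin n, (∑ i : Fin n, (p j).coeff (i:ℕ) * L (X ^ ((i:ℕ) + (l:ℕ)))) * (p k).coeff (l:ℕ))
        = L (p j * p k) := by
      rw [expand]
      rw [Fin.sum_univ_eq_sum_range (fun l => (∑ i : Fin n, (p j).coeff (i:ℕ) * L (X ^ ((i:ℕ) + l))) * (p k).coeff l)]
      refine Finset.sum_congr rfl fun l _ => ?_
      rw [Finset.sum_mul]
      rw [Fin.sum_univ_eq_sum_range (fun i => (p j).coeff i * L (X ^ (i + l)) * (p k).coeff l)]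
    rw [e1]
    by_cases hjk : j = k
    · subst hjk; simp [Matrix.diagonal]
    · rw [Matrix.diagonal_apply_ne _ hjk]
      exact horth j k (fun hc => hjk (Fin.ext hc))
  have hd : (A.transpose * M * A).det = M.det := by
    rw [Matrix.det_mul, Matrix.det_mul, Matrix.det_transpose, hdetA]
    ring
  rw [← hd, key, Matrix.det_diagonal]

end Gram

/-! ### Polynomial calculus over `[-1, 1]` -/

lemma integral_eval_derivative (p : Polynomial ℝ) (a b : ℝ) :
    ∫ x in a..b, (derivative p).eval x = p.eval b - p.eval a := by
  refine intervalIntegral.integral_eq_sub_of_hasDerivAt (fun x _ => p.hasDerivAt x) ?_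
  exact ((derivative p).continuous).intervalIntegrable a b

lemma poly_ibp (p q : Polynomial ℝ) :
    ∫ x in (-1:ℝ)..1, (derivative p).eval x * q.eval x
      = (p * q).eval 1 - (p * q).eval (-1)
        - ∫ x in (-1:ℝ)..1, p.eval x * (derivative q).eval x := by
  have h := integral_eval_derivative (p * q) (-1) 1
  rw [derivative_mul] at h
  have hadd : ∫ x in (-1:ℝ)..1, ((derivative p * q).eval x + (p * derivative q).eval x)
      = (∫ x in (-1:ℝ)..1, (derivative p * q).eval x)
        + ∫ x in (-1:ℝ)..1, (p * derivative q).eval x :=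
    intervalIntegral.integral_add
      ((derivative p * q).continuous.intervalIntegrable _ _)
      ((p * derivative q).continuous.intervalIntegrable _ _)
  simp only [eval_add] at h
  rw [hadd] at h
  simp only [eval_mul] at h ⊢
  linarith

/-! ### Rodrigues polynomials -/

noncomputable def Wpoly (n : ℕ) : Polynomial ℝ := ((X : Polynomial ℝ) ^ 2 - 1) ^ n
noncomputable def Rpoly (n : ℕ) : Polynomial ℝ := derivative^[n] (Wpoly n)
noncomputable def In (n : ℕ) : ℝ := ∫ x in (-1:ℝ)..1, (x ^ 2 - 1) ^ n
noncomputable def legL (p : Polynomial ℝ) : ℝ := ∫ x in (-1:ℝ)..1, p.eval x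
noncomputable def cLeg (n : ℕ) : ℝ := (Nat.factorial n : ℝ) / (Nat.factorial (2 * n) : ℝ)
noncomputable def qLeg (n : ℕ) : Polynomial ℝ := C (cLeg n) * Rpoly n
noncomputable def HLeg (n : ℕ) : ℝ := legL (qLeg n * qLeg n)

lemma Xsq_monic : ((X : Polynomial ℝ) ^ 2 - 1).Monic := by
  have h : ((X : Polynomial ℝ) ^ 2 - 1) = X ^ 2 + C (-1) := by simp [sub_eq_add_neg]
  rw [h]
  exact monic_X_pow_add_C _ (by norm_num)

lemma Wpoly_monic (n : ℕ) : (Wpoly n).Monic := by unfold Wpoly; exact Xsq_monic.pow n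

lemma Xsq_natDegree : ((X : Polynomial ℝ) ^ 2 - 1).natDegree = 2 := by
  compute_degree!

lemma Wpoly_natDegree (n : ℕ) : (Wpoly n).natDegree = 2 * n := by
  rw [Wpoly, Xsq_monic.natDegree_pow, Xsq_natDegree, mul_comm]

lemma eval_iterate_derivative_W {n j : ℕ} (hj : j < n) (x : ℝ) (hx : x ^ 2 = 1) :
    (derivative^[j] (Wpoly n)).eval x = 0 := by
  obtain ⟨S, hS⟩ := pow_sub_dvd_iterate_derivative_pow ((X : Polynomial ℝ) ^ 2 - 1) n j
  rw [Wpoly, hS, eval_mul, eval_pow]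
  have h : ((X : Polynomial ℝ) ^ 2 - 1).eval x = 0 := by simp [hx]
  rw [h, zero_pow (by omega), zero_mul]

lemma shift_integral (n : ℕ) (q : Polynomial ℝ) :
    ∀ i ≤ n, ∫ x in (-1:ℝ)..1, (Rpoly n).eval x * q.eval x
      = (-1 : ℝ) ^ i * ∫ x in (-1:ℝ)..1,
          (derivative^[n - i] (Wpoly n)).eval x * (derivative^[i] q).eval x := by
  intro i hi
  induction i with
  | zero => simp [Rpoly]
  | succ i ih =>
    have hi' : i ≤ n := le_of_lt hi
    rw [ih hi']
    have hsplit : derivative^[n - i] (Wpoly n)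
        = derivative (derivative^[n - (i + 1)] (Wpoly n)) := by
      have hni : n - i = (n - (i + 1)) + 1 := by omega
      rw [hni, Function.iterate_succ_apply']
    rw [hsplit, poly_ibp]
    have hb1 : (derivative^[n - (i + 1)] (Wpoly n) * derivative^[i] q).eval 1 = 0 := by
      rw [eval_mul, eval_iterate_derivative_W (by omega) 1 (by norm_num), zero_mul]
    have hb2 : (derivative^[n - (i + 1)] (Wpoly n) * derivative^[i] q).eval (-1) = 0 := by
      rw [eval_mul, eval_iterate_derivative_W (by omega) (-1) (by norm_num), zero_mul]
    rw [hb1, hb2, Function.iterate_succ_apply']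
    ring

lemma Rpoly_orth {n k : ℕ} (hk : k < n) :
    ∫ x in (-1:ℝ)..1, (Rpoly n).eval x * ((X : Polynomial ℝ) ^ k).eval x = 0 := by
  rw [shift_integral n _ (k+1) hk]
  have h : derivative^[k+1] ((X : Polynomial ℝ) ^ k) = 0 :=
    iterate_derivative_eq_zero (by simp [natDegree_X_pow])
  rw [h]
  simp

lemma iterate_derivative_self_deg (p : Polynomial ℝ) {m : ℕ} (hm : p.natDegree ≤ m) :
    derivative^[m] p = C ((Nat.factorial m : ℝ) * p.coeff m) := by
  have hdeg : (derivative^[m] p).natDegree = 0 := by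
    have := p.natDegree_iterate_derivative m
    omega
  have h := eq_C_of_natDegree_le_zero (le_of_eq hdeg)
  rw [h, coeff_iterate_derivative]
  congr 1
  rw [zero_add, Nat.descFactorial_self]
  simp [mul_comm]

lemma Rpoly_coeff_n (n : ℕ) :
    (Rpoly n).coeff n = (2 * n).descFactorial n := by
  rw [Rpoly, coeff_iterate_derivative]
  have h1 : n + n = 2 * n := by ring
  rw [h1, ← Wpoly_natDegree n]
  rw [show (Wpoly n).coeff (Wpoly n).natDegree = 1 from (Wpoly_monic n).leadingCoeff]
  simp [Wpoly_natDegree]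

lemma Rpoly_natDegree (n : ℕ) : (Rpoly n).natDegree = n := by
  have hle : (Rpoly n).natDegree ≤ n := by
    have := (Wpoly n).natDegree_iterate_derivative n
    rw [Wpoly_natDegree] at this
    rw [Rpoly]; omega
  have hne : (Rpoly n).coeff n ≠ 0 := by
    rw [Rpoly_coeff_n]
    have h : (2 * n).descFactorial n ≠ 0 := by
      rw [Ne, Nat.descFactorial_eq_zero_iff_lt]; omega
    exact_mod_cast h
  exact le_antisymm hle (le_natDegree_of_ne_zero hne)

lemma eval_Wpoly (n : ℕ) (x : ℝ) : (Wpoly n).eval x = (x ^ 2 - 1) ^ n := by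
  simp [Wpoly]

lemma In_rec (n : ℕ) : (2 * n + 3) * In (n + 1) + (2 * n + 2) * In n = 0 := by
  have hpoly : derivative ((X : Polynomial ℝ) * Wpoly (n + 1))
      = C (2 * (n:ℝ) + 3) * Wpoly (n + 1) + C (2 * (n:ℝ) + 2) * Wpoly n := by
    rw [Wpoly, Wpoly, derivative_mul, derivative_X, derivative_pow]
    simp only [derivative_sub, derivative_one, derivative_X_pow]
    push_cast
    simp only [map_add, map_mul, map_ofNat, C_1]
    ring
  have hint := integral_eval_derivative ((X : Polynomial ℝ) * Wpoly (n + 1)) (-1) 1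
  rw [hpoly] at hint
  have hb : ∀ x : ℝ, x ^ 2 = 1 → ((X : Polynomial ℝ) * Wpoly (n + 1)).eval x = 0 := by
    intro x hx
    simp [eval_Wpoly, hx]
  rw [hb 1 (by norm_num), hb (-1) (by norm_num)] at hint
  have hsimp : ∀ x : ℝ,
      (C (2 * (n:ℝ) + 3) * Wpoly (n + 1) + C (2 * (n:ℝ) + 2) * Wpoly n).eval x
        = (2 * (n:ℝ) + 3) * (x ^ 2 - 1) ^ (n + 1) + (2 * (n:ℝ) + 2) * (x ^ 2 - 1) ^ n := by
    intro x; simp [eval_Wpoly]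
  rw [intervalIntegral.integral_congr (fun x _ => hsimp x)] at hint
  have c1 : Continuous fun x : ℝ => (2 * (n:ℝ) + 3) * (x ^ 2 - 1) ^ (n + 1) := by fun_prop
  have c2 : Continuous fun x : ℝ => (2 * (n:ℝ) + 2) * (x ^ 2 - 1) ^ n := by fun_prop
  rw [intervalIntegral.integral_add (c1.intervalIntegrable _ _) (c2.intervalIntegrable _ _),
    intervalIntegral.integral_const_mul, intervalIntegral.integral_const_mul] at hint
  rw [← In, ← In] at hint
  linarith

lemma In_zero : In 0 = 2 := by norm_num [In]

lemma In_sign (n : ℕ) : 0 < (-1 : ℝ) ^ n * In n := by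
  induction n with
  | zero => simp [In_zero]
  | succ n ih =>
    have h := In_rec n
    have h23 : (0:ℝ) < 2 * n + 3 := by positivity
    have hIn : In (n + 1) = -((2 * n + 2) / (2 * n + 3)) * In n := by
      field_simp
      linarith
    rw [hIn]
    have hpos : (0:ℝ) < (2 * n + 2) / (2 * n + 3) := by positivity
    rw [pow_succ]
    calc (0:ℝ) < ((2 * n + 2) / (2 * n + 3)) * ((-1) ^ n * In n) := by positivity
      _ = (-1) ^ n * In n * -1 * (-((2 * n + 2) / (2 * n + 3)) ) := by ring
      _ = (-1) ^ n * -1 * (-((2 * n + 2) / (2 * n + 3)) * In n) := by ring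

lemma legL_add (p q : Polynomial ℝ) : legL (p + q) = legL p + legL q := by
  unfold legL
  simp only [eval_add]
  exact intervalIntegral.integral_add (p.continuous.intervalIntegrable _ _)
    (q.continuous.intervalIntegrable _ _)

lemma legL_smul (c : ℝ) (p : Polynomial ℝ) : legL (C c * p) = c * legL p := by
  unfold legL
  simp only [eval_mul, eval_C]
  exact intervalIntegral.integral_const_mul _ _

lemma cLeg_pos (n : ℕ) : 0 < cLeg n := by
  unfold cLeg
  positivity

lemma cLeg_mul_desc (n : ℕ) : cLeg n * ((2 * n).descFactorial n : ℝ) = 1 := by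
  unfold cLeg
  rw [div_mul_eq_mul_div, div_eq_one_iff_eq (by positivity)]
  have key : Nat.factorial (2 * n - n) * (2*n).descFactorial n = Nat.factorial (2*n) := by
    have := Nat.factorial_mul_descFactorial (show n ≤ 2*n by omega)
    omega
  have h2n : 2 * n - n = n := by omega
  rw [h2n] at key
  exact_mod_cast congrArg (fun x : ℕ => (x : ℝ)) key

lemma qLeg_natDegree (n : ℕ) : (qLeg n).natDegree = n := by
  unfold qLeg
  rw [natDegree_C_mul (ne_of_gt (cLeg_pos n)), Rpoly_natDegree]

lemma qLeg_monic (n : ℕ) : (qLeg n).Monic := by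
  have hd := qLeg_natDegree n
  unfold Monic leadingCoeff
  rw [hd]
  unfold qLeg
  rw [coeff_C_mul, Rpoly_coeff_n]
  exact cLeg_mul_desc n

lemma legL_X_pow_R {n k : ℕ} (hk : k < n) : legL (X ^ k * Rpoly n) = 0 := by
  unfold legL
  rw [← Rpoly_orth hk]
  refine intervalIntegral.integral_congr fun x _ => ?_
  simp [mul_comm]

lemma qLeg_orth (i j : ℕ) (hij : i ≠ j) : legL (qLeg i * qLeg j) = 0 := by
  wlog h : i < j generalizing i j
  · rw [mul_comm]; exact this j i (Ne.symm hij) (by omega)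
  unfold qLeg
  have hassoc : C (cLeg i) * Rpoly i * (C (cLeg j) * Rpoly j)
      = C (cLeg i) * (C (cLeg j) * (Rpoly i * Rpoly j)) := by ring
  rw [hassoc, legL_smul, legL_smul]
  have hexp := L_mul_expand legL legL_add legL_smul (Rpoly i) (Rpoly j)
    (n := i + 1) (by rw [Rpoly_natDegree]; omega)
  rw [hexp]
  have hz : ∀ k ∈ range (i+1), (Rpoly i).coeff k * legL (X ^ k * Rpoly j) = 0 := by
    intro k hk
    rw [legL_X_pow_R (by simp at hk; omega), mul_zero]
  rw [Finset.sum_congr rfl hz]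
  simp

lemma HLeg_eq (n : ℕ) : HLeg n = (cLeg n) ^ 2 * ((Nat.factorial (2*n) : ℝ) * ((-1:ℝ)^n * In n)) := by
  unfold HLeg qLeg
  have hassoc : C (cLeg n) * Rpoly n * (C (cLeg n) * Rpoly n)
      = C (cLeg n) * (C (cLeg n) * (Rpoly n * Rpoly n)) := by ring
  rw [hassoc, legL_smul, legL_smul]
  have hR : legL (Rpoly n * Rpoly n) = (Nat.factorial (2*n) : ℝ) * ((-1:ℝ)^n * In n) := by
    unfold legL
    have h0 : ∫ x in (-1:ℝ)..1, (Rpoly n * Rpoly n).eval x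
        = ∫ x in (-1:ℝ)..1, (Rpoly n).eval x * (Rpoly n).eval x := by
      refine intervalIntegral.integral_congr fun x _ => ?_; simp
    rw [h0, shift_integral n (Rpoly n) n le_rfl]
    have hiter : derivative^[n] (Rpoly n) = C ((Nat.factorial (2*n) : ℝ)) := by
      rw [Rpoly, ← Function.iterate_add_apply]
      have hnn : n + n = 2 * n := by omega
      rw [hnn]
      rw [iterate_derivative_self_deg (Wpoly n) (le_of_eq (Wpoly_natDegree n))]
      have hc : (Wpoly n).coeff ((Wpoly n).natDegree) = 1 := (Wpoly_monic n).leadingCoeff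
      rw [← Wpoly_natDegree n, hc, mul_one]
    rw [Nat.sub_self, Function.iterate_zero_apply, hiter]
    have hev : ∀ x : ℝ, (Wpoly n).eval x * (C ((Nat.factorial (2*n) : ℝ))).eval x
        = (Nat.factorial (2*n) : ℝ) * (x^2-1)^n := by
      intro x; simp [Wpoly, mul_comm]
    rw [intervalIntegral.integral_congr fun x _ => hev x,
      intervalIntegral.integral_const_mul, ← In]
    ring
  rw [hR]; ring

lemma HLeg_pos (n : ℕ) : 0 < HLeg n := by
  rw [HLeg_eq]
  have h1 := In_sign n
  have h2 := cLeg_pos n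
  have h3 : (0:ℝ) < Nat.factorial (2*n) := by positivity
  positivity

lemma HLeg_ratio (n : ℕ) :
    HLeg (n + 1) = ((n:ℝ) + 1) ^ 2 / ((2 * n + 1) * (2 * n + 3)) * HLeg n := by
  have h3' : (2 * (n:ℝ) + 3) ≠ 0 := by positivity
  have hIn : In (n + 1) = -((2 * (n:ℝ) + 2) / (2 * n + 3)) * In n := by
    have := In_rec n
    field_simp
    linarith
  rw [HLeg_eq, HLeg_eq]
  unfold cLeg
  have e1 : 2 * (n + 1) = (2 * n + 1) + 1 := by omega
  rw [e1, Nat.factorial_succ, Nat.factorial_succ, Nat.factorial_succ]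
  push_cast
  have hfac : (0:ℝ) < Nat.factorial (2*n) := by positivity
  have hfacn : (0:ℝ) < Nat.factorial n := by positivity
  have h1 : (0:ℝ) < 2*(n:ℝ)+1 := by positivity
  have h3 : (0:ℝ) < 2*(n:ℝ)+3 := by positivity
  have hJn := In_sign n
  have hval : (-1:ℝ)^(n+1) * In (n+1) = (2 * (n:ℝ) + 2) / (2 * n + 3) * ((-1:ℝ)^n * In n) := by
    rw [hIn, pow_succ]
    ring
  rw [hval]
  field_simp
  ring

/-! ### Moments of the truncated Hermite weight -/

noncomputable def mj (j : ℕ) (z : ℝ) : ℝ :=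
  ∫ t in (-1:ℝ)..1, t ^ j * Real.exp (-(z * t) ^ 2)

noncomputable def nuj (j : ℕ) : ℝ := ∫ t in (-1:ℝ)..1, t ^ j

lemma truncL_add (z : ℝ) (p q : Polynomial ℝ) :
    truncL z (p + q) = truncL z p + truncL z q := by
  unfold truncL
  simp only [eval_add, add_mul]
  exact intervalIntegral.integral_add
    ((p.continuous.mul (by fun_prop)).intervalIntegrable _ _)
    ((q.continuous.mul (by fun_prop)).intervalIntegrable _ _)

lemma truncL_smul (z : ℝ) (c : ℝ) (p : Polynomial ℝ) :
    truncL z (C c * p) = c * truncL z p := by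
  unfold truncL
  simp only [eval_mul, eval_C, mul_assoc]
  exact intervalIntegral.integral_const_mul _ _

lemma truncL_X_pow (z : ℝ) (j : ℕ) :
    truncL z ((X : Polynomial ℝ) ^ j) = z ^ (j + 1) * mj j z := by
  unfold truncL mj
  have h := intervalIntegral.smul_integral_comp_mul_left
    (f := fun x : ℝ => x ^ j * Real.exp (-x ^ 2)) (a := (-1:ℝ)) (b := 1) z
  simp only [mul_neg_one, mul_one] at h
  rw [show ∫ x in (-z)..z, ((X : Polynomial ℝ) ^ j).eval x * Real.exp (-x ^ 2)
      = ∫ x in (-z)..z, x ^ j * Real.exp (-x ^ 2) from by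
    refine intervalIntegral.integral_congr fun x _ => ?_; simp]
  rw [← h]
  rw [show (fun t : ℝ => (z * t) ^ j * Real.exp (-(z * t) ^ 2))
      = fun t : ℝ => z ^ j * (t ^ j * Real.exp (-(z * t) ^ 2)) from
    funext fun t => by rw [mul_pow]; ring]
  rw [intervalIntegral.integral_const_mul, smul_eq_mul, pow_succ]
  ring

lemma mj_sub_nuj_bound (j : ℕ) (z : ℝ) : |mj j z - nuj j| ≤ 2 * z ^ 2 := by
  unfold mj nuj
  rw [← intervalIntegral.integral_sub
    ((by fun_prop : Continuous fun t : ℝ => t ^ j * Real.exp (-(z * t) ^ 2)).intervalIntegrable _ _)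
    ((by fun_prop : Continuous fun t : ℝ => t ^ j).intervalIntegrable _ _)]
  have hb : ∀ t ∈ Set.uIoc (-1:ℝ) 1, ‖t ^ j * Real.exp (-(z * t) ^ 2) - t ^ j‖ ≤ z ^ 2 := by
    intro t ht
    have ht' : |t| ≤ 1 := by
      rw [Set.uIoc_of_le (by norm_num : (-1:ℝ) ≤ 1)] at ht
      rw [abs_le]; exact ⟨le_of_lt ht.1, ht.2⟩
    have h1 : ‖t ^ j * Real.exp (-(z * t) ^ 2) - t ^ j‖
        = |t| ^ j * |Real.exp (-(z * t) ^ 2) - 1| := by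
      rw [show t ^ j * Real.exp (-(z * t) ^ 2) - t ^ j
          = t ^ j * (Real.exp (-(z * t) ^ 2) - 1) from by ring]
      rw [Real.norm_eq_abs, abs_mul, abs_pow]
    rw [h1]
    have h2 : |Real.exp (-(z * t) ^ 2) - 1| ≤ (z * t) ^ 2 := by
      have hle : -(z*t)^2 ≤ 0 := neg_nonpos.mpr (sq_nonneg _)
      rw [abs_sub_comm, abs_of_nonneg (by
        have := Real.exp_le_one_iff.mpr hle
        linarith)]
      have := Real.add_one_le_exp (-(z * t) ^ 2)
      linarith
    calc |t| ^ j * |Real.exp (-(z * t) ^ 2) - 1| ≤ 1 * ((z * t) ^ 2) := by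
          apply mul_le_mul (pow_le_one₀ (abs_nonneg t) ht') h2 (abs_nonneg _) zero_le_one
      _ ≤ z ^ 2 := by
          rw [mul_pow, one_mul]
          have ht2 : t ^ 2 ≤ 1 := by
            have := sq_abs t
            nlinarith [abs_nonneg t]
          nlinarith [sq_nonneg z]
  have hlast := intervalIntegral.norm_integral_le_of_norm_le_const hb
  rw [Real.norm_eq_abs] at hlast
  calc |∫ t in (-1:ℝ)..1, (t ^ j * Real.exp (-(z * t) ^ 2) - t ^ j)| ≤ z ^ 2 * |1 - (-1:ℝ)| := hlast
    _ = 2 * z ^ 2 := by rw [show |(1:ℝ) - -1| = 2 by norm_num]; ring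

lemma mj_tendsto (j : ℕ) :
    Tendsto (fun z => mj j z) (nhdsWithin 0 (Set.Ioi (0:ℝ))) (nhds (nuj j)) := by
  have h0 : Tendsto (fun z : ℝ => mj j z - nuj j) (nhdsWithin 0 (Set.Ioi (0:ℝ))) (nhds 0) := by
    apply squeeze_zero_norm (fun z => mj_sub_nuj_bound j z)
    have h : Tendsto (fun z : ℝ => 2 * z ^ 2) (nhds 0) (nhds 0) := by
      have := (continuous_const.mul (continuous_pow 2) :
        Continuous fun z : ℝ => (2:ℝ) * z ^ 2).tendsto 0
      simp at this; exact this
    exact h.mono_left nhdsWithin_le_nhds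
  have := h0.add_const (nuj j)
  simpa using this

/-! ### Hankel determinants -/

noncomputable def Ematz (k : ℕ) (z : ℝ) : ℝ :=
  (Matrix.of fun i j : Fin k => mj ((i:ℕ) + (j:ℕ)) z).det

noncomputable def Dlim (k : ℕ) : ℝ :=
  (Matrix.of fun i j : Fin k => nuj ((i:ℕ) + (j:ℕ))).det

lemma exp_sum_eq (k : ℕ) :
    (∑ i ∈ range k, (i + 1)) + (∑ i ∈ range k, i) = k * k := by
  have h := Finset.sum_range_id_mul_two k
  have h2 : ∑ i ∈ range k, (i + 1) = (∑ i ∈ range k, i) + k := by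
    rw [Finset.sum_add_distrib]
    simp
  cases k with
  | zero => simp
  | succ m =>
    rw [h2]
    have h3 : (∑ i ∈ range (m+1), i) * 2 = (m+1) * m := by
      rw [h]; simp
    nlinarith [h3]

lemma trunc_hankel_eq (z : ℝ) (k : ℕ) :
    (Matrix.of fun i j : Fin k => truncL z ((X : Polynomial ℝ) ^ ((i:ℕ) + (j:ℕ)))).det
      = z ^ (k * k) * Ematz k z := by
  have hfact : (Matrix.of fun i j : Fin k => truncL z ((X : Polynomial ℝ) ^ ((i:ℕ) + (j:ℕ))))
      = Matrix.diagonal (fun i : Fin k => z ^ ((i:ℕ) + 1))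
        * (Matrix.of fun i j : Fin k => mj ((i:ℕ) + (j:ℕ)) z)
        * Matrix.diagonal (fun j : Fin k => z ^ (j:ℕ)) := by
    ext i j
    rw [Matrix.mul_diagonal, Matrix.diagonal_mul]
    simp only [Matrix.of_apply]
    rw [truncL_X_pow]
    rw [show (i:ℕ) + (j:ℕ) + 1 = ((i:ℕ) + 1) + (j:ℕ) by ring, pow_add]
    ring
  rw [hfact, Matrix.det_mul, Matrix.det_mul, Matrix.det_diagonal, Matrix.det_diagonal]
  rw [Fin.prod_univ_eq_prod_range (fun i => z ^ (i + 1)),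
    Fin.prod_univ_eq_prod_range (fun i => z ^ i),
    Finset.prod_pow_eq_pow_sum, Finset.prod_pow_eq_pow_sum]
  rw [show (Matrix.of fun i j : Fin k => mj ((i:ℕ) + (j:ℕ)) z).det = Ematz k z from rfl]
  rw [← exp_sum_eq k, pow_add]
  ring

lemma Ematz_tendsto (k : ℕ) :
    Tendsto (fun z => Ematz k z) (nhdsWithin 0 (Set.Ioi (0:ℝ))) (nhds (Dlim k)) := by
  have hmat : Tendsto (fun z => (Matrix.of fun i j : Fin k => mj ((i:ℕ) + (j:ℕ)) z))
      (nhdsWithin 0 (Set.Ioi (0:ℝ)))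
      (nhds (Matrix.of fun i j : Fin k => nuj ((i:ℕ) + (j:ℕ)))) := by
    refine tendsto_pi_nhds.mpr ?_
    intro i
    refine tendsto_pi_nhds.mpr ?_
    intro j
    exact mj_tendsto _
  exact ((continuous_id.matrix_det).tendsto _).comp hmat

/-! ### The series limit -/

lemma series_limit {g : ℝ → ℝ} {e : ℕ → ℝ}
    (hs : ∀ᶠ z in nhdsWithin 0 (Set.Ioi (0:ℝ)),
      HasSum (fun k : ℕ => e (k + 1) * z ^ (2 * (k + 1))) (g z)) :
    Tendsto (fun z => g z / z ^ 2) (nhdsWithin 0 (Set.Ioi (0:ℝ))) (nhds (e 1)) := by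
  rw [eventually_iff, mem_nhdsGT_iff_exists_Ioc_subset] at hs
  obtain ⟨u, hu, hsub⟩ := hs
  rw [Set.mem_Ioi] at hu
  have hsum_u : HasSum (fun k : ℕ => e (k + 1) * u ^ (2 * (k + 1))) (g u) :=
    hsub ⟨hu, le_rfl⟩
  have hterms : Tendsto (fun k : ℕ => |e (k + 1) * u ^ (2 * (k + 1))|) atTop (nhds (0:ℝ)) := by
    simpa using hsum_u.summable.tendsto_atTop_zero.abs
  obtain ⟨M, hM⟩ := hterms.bddAbove_range
  have hMbound : ∀ k : ℕ, |e (k + 1)| * u ^ (2 * (k + 1)) ≤ M := by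
    intro k
    have := hM (Set.mem_range_self k)
    rwa [abs_mul, abs_of_nonneg (by positivity : (0:ℝ) ≤ u ^ (2 * (k + 1)))] at this
  set K : ℝ := M / u ^ 4 * (1 - (1/4:ℝ))⁻¹ with hK
  have key : ∀ z ∈ Set.Ioc (0:ℝ) (u/2), |g z / z ^ 2 - e 1| ≤ K * z ^ 2 := by
    intro z hz
    obtain ⟨hz0, hzu⟩ := hz
    have hzu' : z ≤ u := le_trans hzu (by linarith)
    have hz_ne : z ≠ 0 := ne_of_gt hz0
    have h1 : HasSum (fun k : ℕ => e (k + 1) * z ^ (2 * (k + 1))) (g z) := hsub ⟨hz0, hzu'⟩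
    have heq : (fun k : ℕ => e (k + 1) * z ^ (2 * (k + 1)) / z ^ 2)
        = fun k : ℕ => e (k + 1) * z ^ (2 * k) := by
      funext k
      rw [show 2 * (k + 1) = 2 * k + 2 by ring, pow_add]
      field_simp
    have h2 : HasSum (fun k : ℕ => e (k + 1) * z ^ (2 * k)) (g z / z ^ 2) := by
      have := h1.div_const (z ^ 2)
      rwa [heq] at this
    have h3 : HasSum (fun k : ℕ => e (k + 1 + 1) * z ^ (2 * (k + 1)))
        (g z / z ^ 2 - ∑ i ∈ range 1, e (i + 1) * z ^ (2 * i)) :=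
      (hasSum_nat_add_iff' 1).mpr h2
    rw [show ∑ i ∈ range 1, e (i + 1) * z ^ (2 * i) = e 1 by simp] at h3
    have bound : ∀ k : ℕ, |e (k + 1 + 1) * z ^ (2 * (k + 1))|
        ≤ (M / u ^ 4 * z ^ 2) * (1/4 : ℝ) ^ k := by
      intro k
      have hup : (0:ℝ) < u ^ (2 * (k + 2)) := by positivity
      have he : |e (k + 1 + 1)| ≤ M / u ^ (2 * (k + 2)) := by
        rw [le_div_iff₀ hup]
        exact hMbound (k + 1)
      have hr : z ^ 2 / u ^ 2 ≤ 1/4 := by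
        rw [div_le_iff₀ (by positivity)]
        nlinarith
      have hexp : (M / u ^ (2 * (k + 2))) * z ^ (2 * (k + 1))
          = (M / u ^ 4 * z ^ 2) * (z ^ 2 / u ^ 2) ^ k := by
        rw [show 2 * (k + 2) = 2 * k + 4 by ring, show 2 * (k + 1) = 2 * k + 2 by ring,
          pow_add, pow_add, pow_mul, pow_mul, div_pow]
        have hu2 : (u:ℝ) ^ 2 ≠ 0 := by positivity
        have hu4 : (u:ℝ) ^ 4 ≠ 0 := by positivity
        field_simp
      calc |e (k + 1 + 1) * z ^ (2 * (k + 1))|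
          = |e (k + 1 + 1)| * z ^ (2 * (k + 1)) := by
            rw [abs_mul, abs_of_nonneg (by positivity : (0:ℝ) ≤ z ^ (2 * (k+1)))]
        _ ≤ (M / u ^ (2 * (k + 2))) * z ^ (2 * (k + 1)) :=
            mul_le_mul_of_nonneg_right he (by positivity)
        _ = (M / u ^ 4 * z ^ 2) * (z ^ 2 / u ^ 2) ^ k := hexp
        _ ≤ (M / u ^ 4 * z ^ 2) * (1/4 : ℝ) ^ k := by
            have hMnn : 0 ≤ M := le_trans (by positivity) (hMbound 0)
            have := pow_le_pow_left₀ (by positivity : (0:ℝ) ≤ z ^ 2 / u ^ 2) hr k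
            exact mul_le_mul_of_nonneg_left this (by positivity)
    have hgeo : Summable (fun k : ℕ => (M / u ^ 4 * z ^ 2) * (1/4 : ℝ) ^ k) :=
      (summable_geometric_of_lt_one (by norm_num) (by norm_num)).mul_left _
    have habs : Summable (fun k : ℕ => |e (k + 1 + 1) * z ^ (2 * (k + 1))|) :=
      Summable.of_nonneg_of_le (fun k => abs_nonneg _) bound hgeo
    have hnorm : |g z / z ^ 2 - e 1| ≤ ∑' k : ℕ, |e (k + 1 + 1) * z ^ (2 * (k + 1))| := by
      rw [← h3.tsum_eq]
      have := norm_tsum_le_tsum_norm (f := fun k : ℕ => e (k + 1 + 1) * z ^ (2 * (k + 1)))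
        (by simpa only [Real.norm_eq_abs] using habs)
      simpa only [Real.norm_eq_abs] using this
    have htsum_le : (∑' k : ℕ, |e (k + 1 + 1) * z ^ (2 * (k + 1))|)
        ≤ ∑' k : ℕ, (M / u ^ 4 * z ^ 2) * (1/4 : ℝ) ^ k :=
      habs.tsum_le_tsum bound hgeo
    have hval : (∑' k : ℕ, (M / u ^ 4 * z ^ 2) * (1/4 : ℝ) ^ k) = K * z ^ 2 := by
      rw [tsum_mul_left, tsum_geometric_of_lt_one (by norm_num) (by norm_num), hK]
      ring
    linarith
  have hev : ∀ᶠ z in nhdsWithin 0 (Set.Ioi (0:ℝ)), ‖g z / z ^ 2 - e 1‖ ≤ K * z ^ 2 := by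
    rw [eventually_iff, mem_nhdsGT_iff_exists_Ioc_subset]
    refine ⟨u/2, Set.mem_Ioi.mpr (by positivity), fun z hz => ?_⟩
    simpa [Real.norm_eq_abs] using key z hz
  have hKz : Tendsto (fun z : ℝ => K * z ^ 2) (nhdsWithin 0 (Set.Ioi (0:ℝ))) (nhds 0) := by
    have h : Tendsto (fun z : ℝ => K * z ^ 2) (nhds 0) (nhds 0) := by
      have := (continuous_const.mul (continuous_pow 2) :
        Continuous fun z : ℝ => K * z ^ 2).tendsto 0
      convert this using 2 <;> simp [hK]
    exact h.mono_left nhdsWithin_le_nhds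
  have h0 := squeeze_zero_norm' hev hKz
  have := h0.add_const (e 1)
  simpa using this

end THG
theorem truncated_hermite_gamma_series_leading_coeff (P : ℝ → ℕ → Polynomial ℝ) (γ h : ℕ → ℝ → ℝ)
    (hmonic : ∀ z n, (P z n).Monic) (hdeg : ∀ z n, (P z n).natDegree = n)
    (horth : ∀ z, 0 < z → ∀ m n, m ≠ n → truncL z (P z m * P z n) = 0)
    (hP0 : ∀ z, P z 0 = 1) (hP1 : ∀ z, P z 1 = X)
    (hrec : ∀ z, 0 < z → ∀ n, X * P z (n + 1) = P z (n + 2) + C (γ (n + 1) z) * P z n)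
    (hh : ∀ n z, h n z = truncL z (P z n * P z n)) (hγ0 : ∀ z, γ 0 z = 0)
    (η : ℕ → ℕ → ℝ)
    (hseries : ∀ n, ∀ᶠ z in nhdsWithin 0 (Set.Ioi (0 : ℝ)),
      HasSum (fun k : ℕ => η n (k + 1) * z ^ (2 * (k + 1))) (γ n z)) :
    ∀ n : ℕ, 1 ≤ n → η n 1 = (n : ℝ) ^ 2 / (4 * (n : ℝ) ^ 2 - 1) := by
  intro n hn
  obtain ⟨m, rfl⟩ : ∃ m, n = m + 1 := ⟨n - 1, by omega⟩
  -- the three-term recurrence gives γ_{k+1} h_k = h_{k+1}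
  have hgam : ∀ z, 0 < z → ∀ k, γ (k + 1) z * h k z = h (k + 1) z := by
    intro z hz k
    have hA1 : truncL z ((X * P z (k + 1)) * P z k) = γ (k + 1) z * h k z := by
      rw [hrec z hz k]
      have e : (P z (k + 2) + C (γ (k + 1) z) * P z k) * P z k
          = P z (k + 2) * P z k + C (γ (k + 1) z) * (P z k * P z k) := by ring
      rw [e, THG.truncL_add, THG.truncL_smul, horth z hz (k + 2) k (by omega), hh]
      ring
    have hA2 : truncL z ((X * P z (k + 1)) * P z k) = h (k + 1) z := by
      cases k with
      | zero =>
        show truncL z ((X * P z 1) * P z 0) = h 1 z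
        rw [hh, hP0, hP1]
        ring_nf
      | succ j =>
        show truncL z ((X * P z (j + 2)) * P z (j + 1)) = h (j + 2) z
        have hcomm : (X * P z (j + 2)) * P z (j + 1) = P z (j + 2) * (X * P z (j + 1)) := by
          ring
        rw [hcomm, hrec z hz j]
        have e : P z (j + 2) * (P z (j + 2) + C (γ (j + 1) z) * P z j)
            = P z (j + 2) * P z (j + 2) + C (γ (j + 1) z) * (P z (j + 2) * P z j) := by ring
        rw [e, THG.truncL_add, THG.truncL_smul, horth z hz (j + 2) j (by omega), hh]
        ring
    rw [← hA1, hA2]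
  -- Hankel determinant equals product of norms
  have hD : ∀ z, 0 < z → ∀ k,
      (Matrix.of fun i j : Fin k => truncL z ((X : Polynomial ℝ) ^ ((i:ℕ) + (j:ℕ)))).det
        = ∏ i ∈ range k, h i z := by
    intro z hz k
    rw [THG.gram_det (truncL z) (THG.truncL_add z) (THG.truncL_smul z) (P z) (hmonic z) (hdeg z)
      (fun i j hij => horth z hz i j hij) k]
    rw [Fin.prod_univ_eq_prod_range (fun i => truncL z (P z i * P z i))]
    exact Finset.prod_congr rfl fun i _ => (hh i z).symm
  -- Legendre Hankel determinant
  have hDlim : ∀ k, THG.Dlim k = ∏ i ∈ range k, THG.HLeg i := by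
    intro k
    have hentry : (Matrix.of fun i j : Fin k => THG.nuj ((i:ℕ) + (j:ℕ)))
        = Matrix.of fun i j : Fin k => THG.legL ((X : Polynomial ℝ) ^ ((i:ℕ) + (j:ℕ))) := by
      ext i j
      simp only [Matrix.of_apply]
      unfold THG.nuj THG.legL
      refine (intervalIntegral.integral_congr fun x _ => ?_).symm
      simp
    unfold THG.Dlim
    rw [hentry, THG.gram_det THG.legL THG.legL_add THG.legL_smul THG.qLeg THG.qLeg_monic
      THG.qLeg_natDegree THG.qLeg_orth k,
      Fin.prod_univ_eq_prod_range (fun i => THG.legL (THG.qLeg i * THG.qLeg i))]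
    rfl
  -- the key identity for z > 0
  have hkey : ∀ᶠ z in nhdsWithin 0 (Set.Ioi (0:ℝ)),
      (γ (m + 1) z / z ^ 2) * THG.Ematz (m + 1) z ^ 2
        = THG.Ematz (m + 2) z * THG.Ematz m z := by
    filter_upwards [self_mem_nhdsWithin] with z hz
    rw [Set.mem_Ioi] at hz
    have hz_ne : z ≠ 0 := ne_of_gt hz
    have hprod : γ (m + 1) z * (∏ i ∈ range (m + 1), h i z) ^ 2
        = (∏ i ∈ range (m + 2), h i z) * (∏ i ∈ range m, h i z) := by
      rw [prod_range_succ, prod_range_succ, prod_range_succ]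
      linear_combination ((∏ i ∈ range m, h i z) ^ 2 * h m z) * hgam z hz m
    have hDz : ∀ k, z ^ (k * k) * THG.Ematz k z = ∏ i ∈ range k, h i z := fun k => by
      rw [← THG.trunc_hankel_eq, hD z hz k]
    rw [← hDz (m + 1), ← hDz (m + 2), ← hDz m] at hprod
    have e2 : γ (m + 1) z * (z ^ ((m+1) * (m+1)) * THG.Ematz (m + 1) z) ^ 2
        = (γ (m + 1) z * THG.Ematz (m + 1) z ^ 2) * z ^ (((m+1) * (m+1)) * 2) := by
      rw [mul_pow, ← pow_mul]
      ring
    have e3 : z ^ ((m+2) * (m+2)) * THG.Ematz (m + 2) z * (z ^ (m * m) * THG.Ematz m z)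
        = (THG.Ematz (m + 2) z * THG.Ematz m z * z ^ 2) * z ^ (((m+1) * (m+1)) * 2) := by
      have hexp : (m+2) * (m+2) + m * m = ((m+1) * (m+1)) * 2 + 2 := by ring
      calc z ^ ((m+2) * (m+2)) * THG.Ematz (m + 2) z * (z ^ (m * m) * THG.Ematz m z)
          = THG.Ematz (m + 2) z * THG.Ematz m z * z ^ ((m+2) * (m+2) + m * m) := by
            rw [pow_add]; ring
        _ = (THG.Ematz (m + 2) z * THG.Ematz m z * z ^ 2) * z ^ (((m+1) * (m+1)) * 2) := by
            rw [hexp, pow_add]; ring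
    have e4 : (γ (m + 1) z * THG.Ematz (m + 1) z ^ 2) * z ^ (((m+1) * (m+1)) * 2)
        = (THG.Ematz (m + 2) z * THG.Ematz m z * z ^ 2) * z ^ (((m+1) * (m+1)) * 2) := by
      rw [← e2, ← e3]
      exact hprod
    have hmain : γ (m + 1) z * THG.Ematz (m + 1) z ^ 2
        = THG.Ematz (m + 2) z * THG.Ematz m z * z ^ 2 :=
      mul_right_cancel₀ (pow_ne_zero _ hz_ne) e4
    have hz2 : (z:ℝ) ^ 2 ≠ 0 := pow_ne_zero _ hz_ne
    field_simp
    linear_combination hmain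
  -- take limits
  have hγlim := THG.series_limit (hseries (m + 1))
  have hL : Tendsto (fun z => (γ (m + 1) z / z ^ 2) * THG.Ematz (m + 1) z ^ 2)
      (nhdsWithin 0 (Set.Ioi (0:ℝ)))
      (nhds (η (m + 1) 1 * THG.Dlim (m + 1) ^ 2)) :=
    hγlim.mul ((THG.Ematz_tendsto (m + 1)).pow 2)
  have hR : Tendsto (fun z => THG.Ematz (m + 2) z * THG.Ematz m z)
      (nhdsWithin 0 (Set.Ioi (0:ℝ)))
      (nhds (THG.Dlim (m + 2) * THG.Dlim m)) :=
    (THG.Ematz_tendsto (m + 2)).mul (THG.Ematz_tendsto m)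
  have huniq : η (m + 1) 1 * THG.Dlim (m + 1) ^ 2 = THG.Dlim (m + 2) * THG.Dlim m :=
    tendsto_nhds_unique (hL.congr' (hkey.mono fun z hz => hz)) hR
  rw [hDlim, hDlim, hDlim, prod_range_succ, prod_range_succ, prod_range_succ] at huniq
  have hHpos : ∀ i, 0 < THG.HLeg i := THG.HLeg_pos
  have hPm : 0 < ∏ i ∈ range m, THG.HLeg i := Finset.prod_pos fun i _ => hHpos i
  have h5 : η (m + 1) 1 * THG.HLeg m = THG.HLeg (m + 1) := by
    have hc : (∏ i ∈ range m, THG.HLeg i) ^ 2 * THG.HLeg m ≠ 0 :=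
      ne_of_gt (mul_pos (pow_pos hPm 2) (hHpos m))
    apply mul_left_cancel₀ hc
    linear_combination huniq
  have hm0 : THG.HLeg m ≠ 0 := ne_of_gt (hHpos m)
  have hval : η (m + 1) 1 = THG.HLeg (m + 1) / THG.HLeg m := by
    field_simp
    linarith [h5]
  rw [hval, THG.HLeg_ratio m]
  have hd1 : ((2:ℝ) * m + 1) * (2 * m + 3) ≠ 0 := by positivity
  have hd2 : (4:ℝ) * ((m:ℝ) + 1) ^ 2 - 1 ≠ 0 := by
    have hmnn : (0:ℝ) ≤ (m:ℝ) := Nat.cast_nonneg m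
    nlinarith
  push_cast
  rw [show (4:ℝ) * ((m:ℝ) + 1) ^ 2 - 1 = (2 * m + 1) * (2 * m + 3) by ring]
  field_simp
end
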